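/- A positive integer m^opt maximizes P_B(m,η) = (1 - 2^{-m})·η^{2m} over m ≥ 1 if it satisfies f(m^opt - 1) ≤ η² < f(m^opt), where f(0)=0 and f(m) = (1 - 2^{-m})/(1 - 2^{-(m+1)}) for m ≥ 1. -/
import Mathlib


/-- Boosted type II fusion gate success probability. -/
noncomputable def P_B (m : ℕ) (η : ℝ) : ℝ := (1 - (1/2 : ℝ)^m) * η^(2*m)

/-- Improvement factor from adding one more fused pair. -/
noncomputable def f (m : ℕ) : ℝ :=
  if m = 0 then 0 else (1 - (1/2 : ℝ)^m) / (1 - (1/2 : ℝ)^(m+1))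

lemma half_pow_lt_one (m : ℕ) (hm : m ≠ 0) : (1/2 : ℝ)^m < 1 :=
  pow_lt_one₀ (by norm_num) (by norm_num) hm

lemma denom_pos (m : ℕ) : (0:ℝ) < 1 - (1/2 : ℝ)^(m+1) := by
  have := half_pow_lt_one (m+1) (Nat.succ_ne_zero m)
  linarith

lemma f_le_succ (m : ℕ) : f m ≤ f (m+1) := by
  unfold f
  rcases Nat.eq_zero_or_pos m with h | h
  · subst h; norm_num
  · rw [if_neg (by omega), if_neg (by omega)]
    rw [div_le_div_iff₀ (denom_pos m) (denom_pos (m+1))]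
    have hx : (0:ℝ) ≤ (1/2:ℝ)^m := by positivity
    rw [pow_succ, pow_succ]
    nlinarith [hx]

lemma f_mono : Monotone f := monotone_nat_of_le_succ f_le_succ

lemma step_le (η : ℝ) (hη0 : 0 < η) (m : ℕ) (hm : 1 ≤ m)
    (h : f m ≤ η^2) : P_B m η ≤ P_B (m+1) η := by
  unfold P_B
  unfold f at h
  rw [if_neg (by omega)] at h
  rw [div_le_iff₀ (denom_pos m)] at h
  have hηp : (0:ℝ) < η^(2*m) := pow_pos hη0 _
  have h2 : η^(2*(m+1)) = η^(2*m) * η^2 := by rw [← pow_add]; ring_nf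
  rw [h2]
  calc (1 - (1/2:ℝ)^m) * η^(2*m) ≤ (η^2 * (1 - (1/2:ℝ)^(m+1))) * η^(2*m) := by
        apply mul_le_mul_of_nonneg_right h (le_of_lt hηp)
    _ = (1 - (1/2:ℝ)^(m+1)) * (η^(2*m) * η^2) := by ring

lemma step_ge (η : ℝ) (hη0 : 0 < η) (m : ℕ) (hm : 1 ≤ m)
    (h : η^2 ≤ f m) : P_B (m+1) η ≤ P_B m η := by
  unfold P_B
  unfold f at h
  rw [if_neg (by omega)] at h
  rw [le_div_iff₀ (denom_pos m)] at h
  have hηp : (0:ℝ) < η^(2*m) := pow_pos hη0 _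
  have h2 : η^(2*(m+1)) = η^(2*m) * η^2 := by rw [← pow_add]; ring_nf
  rw [h2]
  calc (1 - (1/2:ℝ)^(m+1)) * (η^(2*m) * η^2)
      = (η^2 * (1 - (1/2:ℝ)^(m+1))) * η^(2*m) := by ring
    _ ≤ (1 - (1/2:ℝ)^m) * η^(2*m) := mul_le_mul_of_nonneg_right h (le_of_lt hηp)

theorem boosted_fusion_optimal_m (η : ℝ) (hη0 : 0 < η) (hη1 : η ≤ 1)
    (mopt : ℕ) (hmopt : 1 ≤ mopt)
    (hlow : f (mopt - 1) ≤ η^2) (hhigh : η^2 < f mopt) :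
    ∀ m : ℕ, 1 ≤ m → P_B m η ≤ P_B mopt η := by
  intro m hm
  rcases le_or_gt m mopt with hle | hgt
  · -- increasing up to mopt
    have key : ∀ n, m ≤ n → n ≤ mopt → P_B m η ≤ P_B n η := by
      intro n hn
      induction n, hn using Nat.le_induction with
      | base => intro _; exact le_refl _
      | succ n hn ih =>
        intro hnm
        have hnlt : n ≤ mopt - 1 := by omega
        have hfn : f n ≤ η^2 := le_trans (f_mono hnlt) hlow
        exact le_trans (ih (by omega)) (step_le η hη0 n (by omega) hfn)
    exact key mopt hle (le_refl _)
  · -- decreasing after mopt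
    have key : ∀ n, mopt ≤ n → P_B n η ≤ P_B mopt η := by
      intro n hn
      induction n, hn using Nat.le_induction with
      | base => exact le_refl _
      | succ n hn ih =>
        have hfn : η^2 ≤ f n := le_of_lt (lt_of_lt_of_le hhigh (f_mono hn))
        exact le_trans (step_ge η hη0 n (by omega) hfn) ih
    exact key m (le_of_lt hgt)
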